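/- If V is a 2-dimensional real vector space and φ is a symmetric bilinear form of rank 2 on V, then an invertible linear map A satisfies A*R_φ = R_φ if and only if det A = ±1. -/

import Mathlib

/-- The canonical algebraic curvature tensor built from a symmetric bilinear form. -/
def canACT {V : Type*} [AddCommGroup V] [Module ℝ V]
    (φ : LinearMap.BilinForm ℝ V) (x y z w : V) : ℝ :=
  φ x w * φ y z - φ x z * φ y w

lemma canACT_eq_det {V : Type*} [AddCommGroup V] [Module ℝ V]
    (φ : LinearMap.BilinForm ℝ V) (b : Module.Basis (Fin 2) ℝ V) (x y z w : V) :
    canACT φ x y z w =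
      (φ (b 0) (b 1) * φ (b 1) (b 0) - φ (b 0) (b 0) * φ (b 1) (b 1)) *
        b.det ![x, y] * b.det ![z, w] := by
  conv_lhs => rw [← b.sum_repr x, ← b.sum_repr y, ← b.sum_repr z, ← b.sum_repr w]
  simp only [canACT, Fin.sum_univ_two, map_add, map_smul, LinearMap.add_apply,
    LinearMap.smul_apply, smul_eq_mul, Module.Basis.det_apply, Matrix.det_fin_two,
    Module.Basis.toMatrix_apply, Matrix.cons_val_zero, Matrix.cons_val_one, Matrix.head_cons]
  ring

theorem stmt7 {V : Type*} [AddCommGroup V] [Module ℝ V] [FiniteDimensional ℝ V]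
    (hdim : Module.finrank ℝ V = 2)
    (φ : LinearMap.BilinForm ℝ V) (hsymm : ∀ x y : V, φ x y = φ y x)
    (hnd : φ.Nondegenerate)  -- rank φ = 2
    (A : V ≃ₗ[ℝ] V) :
    (∀ x y z w : V, canACT φ (A x) (A y) (A z) (A w) = canACT φ x y z w) ↔
      (LinearMap.det (A : V →ₗ[ℝ] V) = 1 ∨ LinearMap.det (A : V →ₗ[ℝ] V) = -1) := by
  classical
  let b : Module.Basis (Fin 2) ℝ V := Module.finBasisOfFinrankEq ℝ V hdim
  set c : ℝ := φ (b 0) (b 1) * φ (b 1) (b 0) - φ (b 0) (b 0) * φ (b 1) (b 1) with hc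
  have hcne : c ≠ 0 := by
    have hdet := (hnd.toMatrix b).det_ne_zero
    rw [Matrix.det_fin_two] at hdet
    simp only [BilinForm.toMatrix_apply] at hdet
    intro h
    apply hdet
    rw [hc] at h
    linarith
  set d : ℝ := LinearMap.det (A : V →ₗ[ℝ] V) with hd
  have hAmap : ∀ x y : V, (![A x, A y] : Fin 2 → V) = (A : V →ₗ[ℝ] V) ∘ ![x, y] := by
    intro x y; funext i; fin_cases i <;> simp
  have hdetA : ∀ x y : V, b.det ![A x, A y] = d * b.det ![x, y] := by
    intro x y; rw [hAmap, Module.Basis.det_comp]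
  have hbb : (![b 0, b 1] : Fin 2 → V) = ⇑b := by
    funext i; fin_cases i <;> simp
  have hdb : b.det ![b 0, b 1] = 1 := by rw [hbb, Module.Basis.det_self]
  constructor
  · intro h
    have key := h (b 0) (b 1) (b 0) (b 1)
    rw [canACT_eq_det φ b, canACT_eq_det φ b, hdetA, hdb] at key
    have h2 : c * (d * d) = c * 1 := by linear_combination key
    exact mul_self_eq_one_iff.mp (mul_left_cancel₀ hcne h2)
  · intro h
    have hd2 : d * d = 1 := by rcases h with h | h <;> rw [← hd] at * <;> rw [h] <;> ring
    intro x y z w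
    rw [canACT_eq_det φ b (A x), canACT_eq_det φ b x, hdetA, hdetA]
    linear_combination c * b.det ![x, y] * b.det ![z, w] * hd2
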